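/- For every integer m and nonnegative integer k: 2·∑_{j=0}^{k} j·T_{j+m} = −T_{m−2} + 3·T_{m+1} + (k−1)·T_{k+m−1} + (2k−1)·T_{k+m} + (k−2)·T_{k+m+1}. -/

import Mathlib

/-- Tribonacci numbers on the naturals. -/
def tribN : ℕ → ℤ
  | 0 => 0
  | 1 => 1
  | 2 => 1
  | n + 3 => tribN (n + 2) + tribN (n + 1) + tribN n

/-- Tribonacci at negative indices: `tribNeg n = T (-n)`, via `T (-n) = 2·T (3-n) - T (4-n)`. -/
def tribNeg : ℕ → ℤ
  | 0 => tribN 0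
  | 1 => 2 * tribN 2 - tribN 3
  | 2 => 2 * tribN 1 - tribN 2
  | 3 => 2 * tribN 0 - tribN 1
  | 4 => 2 * tribNeg 1 - tribN 0
  | n + 5 => 2 * tribNeg (n + 2) - tribNeg (n + 1)

/-- Tribonacci sequence extended to all integers. -/
def T (m : ℤ) : ℤ := if 0 ≤ m then tribN m.toNat else tribNeg (-m).toNat

lemma Tpos (n : ℕ) : T (n : ℤ) = tribN n := by simp [T]

lemma Tneg (n : ℕ) : T (-(n : ℤ)) = tribNeg n := by
  cases n with
  | zero => simp [T, tribN, tribNeg]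
  | succ n =>
    rw [T, if_neg (by push_cast; omega)]
    simp

lemma TA (m : ℤ) : T m = 2 * T (m + 3) - T (m + 4) := by
  rcases le_or_gt 0 m with h | h
  · lift m to ℕ using h
    have h3 : ((m : ℤ) + 3) = ((m + 3 : ℕ) : ℤ) := by push_cast; ring
    have h4 : ((m : ℤ) + 4) = ((m + 4 : ℕ) : ℤ) := by push_cast; ring
    rw [h3, h4, Tpos, Tpos, Tpos]
    have e1 : tribN (m + 3) = tribN (m + 2) + tribN (m + 1) + tribN m := by
      simp [tribN]
    have e2 : tribN (m + 4) = tribN (m + 3) + tribN (m + 2) + tribN (m + 1) := by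
      show tribN (m + 1 + 3) = _
      simp [tribN]
    linarith
  · obtain ⟨n, rfl⟩ : ∃ n : ℕ, m = -((n : ℤ) + 1) := ⟨(-m - 1).toNat, by omega⟩
    match n with
    | 0 => norm_num [T, tribN, tribNeg]; rfl
    | 1 => norm_num [T, tribN, tribNeg]; rfl
    | 2 => norm_num [T, tribN, tribNeg]; rfl
    | 3 =>
        norm_num [T]
        norm_num [tribN, tribNeg]
        rfl
    | (n + 4) =>
        have h0 : -(((n + 4 : ℕ) : ℤ) + 1) = -((n + 5 : ℕ) : ℤ) := by push_cast; ring
        have h3 : -((n + 5 : ℕ) : ℤ) + 3 = -((n + 2 : ℕ) : ℤ) := by push_cast; ring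
        have h4 : -((n + 5 : ℕ) : ℤ) + 4 = -((n + 1 : ℕ) : ℤ) := by push_cast; ring
        rw [h0, h3, h4, Tneg, Tneg, Tneg]
        rfl

lemma rec3 (m : ℤ) : T (m + 3) = T (m + 2) + T (m + 1) + T m := by
  induction m using Int.induction_on with
  | zero => norm_num [T, tribN]; rfl
  | succ n ih =>
    have h4 : (n : ℤ) + 1 + 3 = (n : ℤ) + 4 := by ring
    have := TA (n : ℤ)
    have := TA ((n : ℤ) + 1)
    have e1 : ((n : ℤ) + 1 + 3) = ((n + 4 : ℕ) : ℤ) := by push_cast; ring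
    have e2 : ((n : ℤ) + 1 + 2) = ((n + 3 : ℕ) : ℤ) := by push_cast; ring
    have e3 : ((n : ℤ) + 1 + 1) = ((n + 2 : ℕ) : ℤ) := by push_cast; ring
    have e4 : ((n : ℤ) + 1) = ((n + 1 : ℕ) : ℤ) := by push_cast; ring
    rw [e1, e2, e3, e4, Tpos, Tpos, Tpos, Tpos]
    show tribN (n + 1 + 3) = _
    simp [tribN]
  | pred n ih =>
    have hA := TA (-(n : ℤ) - 1)
    have e1 : -(n : ℤ) - 1 + 3 = -(n : ℤ) + 2 := by ring
    have e2 : -(n : ℤ) - 1 + 4 = -(n : ℤ) + 3 := by ring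
    rw [e1, e2] at hA
    have f1 : -(n : ℤ) - 1 + 3 = -(n : ℤ) + 2 := by ring
    have f2 : -(n : ℤ) - 1 + 2 = -(n : ℤ) + 1 := by ring
    have f3 : -(n : ℤ) - 1 + 1 = -(n : ℤ) := by ring
    rw [f1, f2, f3]
    linarith

theorem stmt13 : ∀ (m : ℤ) (k : ℕ),
    2 * ∑ j ∈ Finset.range (k + 1), (j : ℤ) * T (j + m) =
      -T (m - 2) + 3 * T (m + 1) + ((k : ℤ) - 1) * T (k + m - 1) +
        (2 * (k : ℤ) - 1) * T (k + m) + ((k : ℤ) - 2) * T (k + m + 1) := by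
  intro m k
  induction k with
  | zero =>
    simp only [Finset.sum_range_one, Nat.cast_zero, zero_mul, mul_zero, zero_add]
    have h := rec3 (m - 2)
    ring_nf at h ⊢
    linarith
  | succ k ih =>
    rw [Finset.sum_range_succ, mul_add, ih]
    have h := rec3 ((k : ℤ) + m - 1)
    push_cast
    linear_combination (norm := ring_nf) (1 - (k : ℤ)) * h
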